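/- For every α ∈ ℝ, the 2-form ω := α(e¹⁴ + e²⁵ + e³⁶) on ℝ⁶ satisfies λ((1/3)·dω) = −(1/27)·α⁴. (In particular λ((1/3)dω) < 0 for α ≠ 0, so there is no left-invariant nearly para-Kähler structure of non-zero type on Lie groups with Lie algebra 𝔰𝔲(2) ⊕ 𝔰𝔲(2).) -/

import Mathlib

open Finset

/-- Model of the exterior algebra of `(ℝ⁶)*`: an element is given by its coefficients
with respect to the basis monomials `e^S = e^{i₁} ∧ … ∧ e^{i_k}`, `S = {i₁ < … < i_k}`. -/
abbrev E : Type := Finset (Fin 6) → ℝ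

/-- The wedge product in this model: the sign is the parity of the number of
inversions when merging the (sorted) index sets. -/
noncomputable def wedge (a b : E) : E := fun S =>
  ∑ T ∈ S.powerset,
    (-1 : ℝ) ^ (((T ×ˢ (S \ T)).filter (fun p => p.2 < p.1)).card) * a T * b (S \ T)

/-- The basis monomial `e^S`. -/
def bas (S : Finset (Fin 6)) : E := fun T => if T = S then 1 else 0

/-- The volume form `vol = e^{123456}`. -/
noncomputable def vol : E := bas Finset.univ

/-- Interior product (contraction) `v ⌟ a` of a vector `v ∈ ℝ⁶` with a form `a`. -/
noncomputable def contr (v : Fin 6 → ℝ) (a : E) : E := fun S =>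
  ∑ i : Fin 6,
    if i ∈ S then 0
    else (-1 : ℝ) ^ ((S.filter (fun s => s < i)).card) * v i * a (insert i S)

/-- `a` is a `k`-form, i.e. concentrated in degree `k`. -/
def IsForm (k : ℕ) (a : E) : Prop := ∀ S, S.card ≠ k → a S = 0

/-- The differential on the generators (`0`-indexed): `de¹ = e²³`, `de² = e³¹ = -e¹³`,
`de³ = e¹²`, `de⁴ = e⁵⁶`, `de⁵ = e⁶⁴ = -e⁴⁶`, `de⁶ = e⁴⁵`
(the structure constants of `𝔰𝔲(2) ⊕ 𝔰𝔲(2)`). -/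
noncomputable def dgen : Fin 6 → E := fun i =>
  if i = 0 then bas {1, 2}
  else if i = 1 then -bas {0, 2}
  else if i = 2 then bas {0, 1}
  else if i = 3 then bas {4, 5}
  else if i = 4 then -bas {3, 5}
  else bas {3, 4}

/-- The Chevalley–Eilenberg differential: the unique degree `+1` antiderivation of the
exterior algebra extending `dgen`; on a basis monomial `e^S`, `S = {i₁ < … < i_k}`, it is
`d(e^S) = ∑ₜ (-1)^{t-1} e^{S \ {i_t}} ∧ d(e^{i_t})`, extended linearly. -/
noncomputable def d (a : E) : E :=
  ∑ S : Finset (Fin 6), ∑ t ∈ S,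
    (a S * (-1 : ℝ) ^ ((S.filter (fun s => s < t)).card)) • wedge (bas (S.erase t)) (dgen t)

/-- `K` is the matrix of the linear map `K_ρ` associated to the 3-form `ρ`,
characterised by `(v ⌟ ρ) ∧ ρ = K_ρ(v) ⌟ vol` for all `v`. -/
def IsKrho (ρ : E) (K : Matrix (Fin 6) (Fin 6) ℝ) : Prop :=
  ∀ v : Fin 6 → ℝ, wedge (contr v ρ) ρ = contr (K.mulVec v) vol

/-- The quartic invariant `λ(ρ) = (1/6)·tr(K_ρ ∘ K_ρ)`, expressed via `K = K_ρ`. -/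
noncomputable def lamK (K : Matrix (Fin 6) (Fin 6) ℝ) : ℝ := (1 / 6 : ℝ) * (K * K).trace

/-- `J_ρ = K_ρ / √|λ(ρ)|`, expressed via `K = K_ρ`. -/
noncomputable def Jmat (K : Matrix (Fin 6) (Fin 6) ℝ) : Matrix (Fin 6) (Fin 6) ℝ :=
  (Real.sqrt |lamK K|)⁻¹ • K

/-- `ψ⁺ := (1/3) dω`. -/
noncomputable def psiP (ω : E) : E := (3 : ℝ)⁻¹ • d ω

/-- `ω = α(e¹⁴ + e²⁵ + e³⁶)`. -/
noncomputable def omegaA (α : ℝ) : E := α • (bas {0, 3} + bas {1, 4} + bas {2, 5})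

lemma contr_single (j : Fin 6) (c : ℝ) (a : E) :
    contr (Pi.single j c) a = fun S =>
      if j ∈ S then 0 else (-1 : ℝ) ^ ((S.filter (fun s => s < j)).card) * c * a (insert j S) := by
  funext S
  rw [contr, Fintype.sum_eq_single j]
  · simp
  · intro i hi
    simp [Pi.single_apply, hi]

lemma contr_vol (w : Fin 6 → ℝ) (i : Fin 6) :
    contr w vol (Finset.univ.erase i) = (-1 : ℝ) ^ (i : ℕ) * w i := by
  have hc : ((Finset.univ.erase i).filter (fun s => s < i)).card = (i : ℕ) := by
    fin_cases i <;> decide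
  rw [contr, Fintype.sum_eq_single i]
  · simp [hc, vol, bas, Finset.insert_erase (Finset.mem_univ i)]
  · intro x hx
    simp [Finset.mem_erase, hx]

lemma contr_single_bas {j : Fin 6} (c : ℝ) {A : Finset (Fin 6)} (hj : j ∈ A) :
    contr (Pi.single j c) (bas A) =
      ((-1 : ℝ) ^ (((A.erase j).filter (fun s => s < j)).card) * c) • bas (A.erase j) := by
  rw [contr_single]
  funext T
  by_cases h1 : j ∈ T
  · have : T ≠ A.erase j := fun h => by simp [h] at h1
    simp [h1, bas, this]
  · by_cases h2 : T = A.erase j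
    · subst h2
      simp [h1, bas, Finset.insert_erase hj]
    · have : insert j T ≠ A := by
        intro h
        apply h2
        rw [← h, Finset.erase_insert h1]
      simp [h1, bas, h2, this]

lemma contr_single_bas_zero {j : Fin 6} (c : ℝ) {A : Finset (Fin 6)} (hj : j ∉ A) :
    contr (Pi.single j c) (bas A) = 0 := by
  rw [contr_single]
  funext T
  by_cases h1 : j ∈ T
  · simp [h1]
  · have : insert j T ≠ A := fun h => hj (h ▸ Finset.mem_insert_self j T)
    simp [h1, bas, this]

lemma contr_add (v : Fin 6 → ℝ) (a b : E) : contr v (a + b) = contr v a + contr v b := by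
  funext S
  simp only [contr, Pi.add_apply, ← Finset.sum_add_distrib]
  refine Finset.sum_congr rfl fun i _ => ?_
  by_cases h : i ∈ S <;> simp [h, mul_add]

lemma contr_sub (v : Fin 6 → ℝ) (a b : E) : contr v (a - b) = contr v a - contr v b := by
  funext S
  simp only [contr, Pi.sub_apply, ← Finset.sum_sub_distrib]
  refine Finset.sum_congr rfl fun i _ => ?_
  by_cases h : i ∈ S <;> simp [h, mul_sub]

lemma contr_smul (v : Fin 6 → ℝ) (c : ℝ) (a : E) : contr v (c • a) = c • contr v a := by
  funext S
  simp only [contr, Pi.smul_apply, smul_eq_mul, Finset.mul_sum]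
  refine Finset.sum_congr rfl fun i _ => ?_
  by_cases h : i ∈ S <;> [simp [h]; skip]
  simp only [h, if_neg, if_false]
  ring

lemma wedge_add_left (a b c : E) : wedge (a + b) c = wedge a c + wedge b c := by
  funext S
  simp only [wedge, Pi.add_apply, ← Finset.sum_add_distrib]
  exact Finset.sum_congr rfl fun T _ => by ring

lemma wedge_sub_left (a b c : E) : wedge (a - b) c = wedge a c - wedge b c := by
  funext S
  simp only [wedge, Pi.sub_apply, ← Finset.sum_sub_distrib]
  exact Finset.sum_congr rfl fun T _ => by ring

lemma wedge_add_right (a b c : E) : wedge a (b + c) = wedge a b + wedge a c := by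
  funext S
  simp only [wedge, Pi.add_apply, ← Finset.sum_add_distrib]
  exact Finset.sum_congr rfl fun T _ => by ring

lemma wedge_sub_right (a b c : E) : wedge a (b - c) = wedge a b - wedge a c := by
  funext S
  simp only [wedge, Pi.sub_apply, ← Finset.sum_sub_distrib]
  exact Finset.sum_congr rfl fun T _ => by ring

lemma wedge_neg_left (a b : E) : wedge (-a) b = -wedge a b := by
  funext S
  simp only [wedge, Pi.neg_apply, ← Finset.sum_neg_distrib]
  exact Finset.sum_congr rfl fun T _ => by ring

lemma wedge_neg_right (a b : E) : wedge a (-b) = -wedge a b := by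
  funext S
  simp only [wedge, Pi.neg_apply, ← Finset.sum_neg_distrib]
  exact Finset.sum_congr rfl fun T _ => by ring

lemma wedge_smul_left (c : ℝ) (a b : E) : wedge (c • a) b = c • wedge a b := by
  funext S
  simp only [wedge, Pi.smul_apply, smul_eq_mul, Finset.mul_sum]
  exact Finset.sum_congr rfl fun T _ => by ring

lemma wedge_smul_right (c : ℝ) (a b : E) : wedge a (c • b) = c • wedge a b := by
  funext S
  simp only [wedge, Pi.smul_apply, smul_eq_mul, Finset.mul_sum]
  exact Finset.sum_congr rfl fun T _ => by ring

lemma d_smul (c : ℝ) (a : E) : d (c • a) = c • d a := by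
  rw [d, d, Finset.smul_sum]
  refine Finset.sum_congr rfl fun S _ => ?_
  rw [Finset.smul_sum]
  refine Finset.sum_congr rfl fun t _ => ?_
  rw [smul_smul]
  congr 1
  simp [mul_assoc]

lemma d_add (a b : E) : d (a + b) = d a + d b := by
  rw [d, d, d, ← Finset.sum_add_distrib]
  refine Finset.sum_congr rfl fun S _ => ?_
  rw [← Finset.sum_add_distrib]
  refine Finset.sum_congr rfl fun t _ => ?_
  rw [← add_smul]
  congr 1
  simp [add_mul]

lemma d_bas (S₀ : Finset (Fin 6)) :
    d (bas S₀) = ∑ t ∈ S₀,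
      ((-1 : ℝ) ^ ((S₀.filter (fun s => s < t)).card)) • wedge (bas (S₀.erase t)) (dgen t) := by
  rw [d, Finset.sum_eq_single S₀]
  · refine Finset.sum_congr rfl fun t _ => ?_
    simp [bas]
  · intro S _ hS
    apply Finset.sum_eq_zero
    intro t _
    simp [bas, hS]
  · simp

lemma wedge_bas (A B : Finset (Fin 6)) :
    wedge (bas A) (bas B) = fun S =>
      if A ⊆ S ∧ S \ A = B then
        (-1 : ℝ) ^ (((A ×ˢ B).filter (fun p => p.2 < p.1)).card) else 0 := by
  funext S
  rw [wedge]
  by_cases hA : A ⊆ S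
  · rw [Finset.sum_eq_single A]
    · by_cases hB : S \ A = B
      · simp [bas, hA, hB]
      · simp [bas, hA, hB]
    · intro T _ hT
      simp [bas, hT]
    · simp [Finset.mem_powerset, hA]
  · rw [Finset.sum_eq_zero, if_neg (by simp [hA])]
    intro T hT
    rw [Finset.mem_powerset] at hT
    have : T ≠ A := fun h => hA (h ▸ hT)
    simp [bas, this]

lemma wedge_bas' (A B C : Finset (Fin 6)) (c : ℝ)
    (h : ∀ S : Finset (Fin 6), (A ⊆ S ∧ S \ A = B) ↔ S = C)
    (hc : (-1 : ℝ) ^ (((A ×ˢ B).filter (fun p => p.2 < p.1)).card) = c) :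
    wedge (bas A) (bas B) = c • bas C := by
  rw [wedge_bas]
  funext S
  simp only [h, Pi.smul_apply, bas, smul_eq_mul, hc]
  by_cases hS : S = C <;> simp [hS]

lemma wedge_bas_zero (A B : Finset (Fin 6))
    (h : ∀ S : Finset (Fin 6), ¬(A ⊆ S ∧ S \ A = B)) :
    wedge (bas A) (bas B) = 0 := by
  rw [wedge_bas]
  funext S
  simp [h S]

lemma dg0 : dgen 0 = bas {1,2} := rfl
lemma dg1 : dgen 1 = -bas {0,2} := rfl
lemma dg2 : dgen 2 = bas {0,1} := rfl
lemma dg3 : dgen 3 = bas {4,5} := rfl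
lemma dg4 : dgen 4 = -bas {3,5} := rfl
lemma dg5 : dgen 5 = bas {3,4} := rfl
lemma wd3_12 : wedge (bas {3}) (bas {1,2}) = (1 : ℝ) • bas {1,2,3} := by
  rw [wedge_bas' {3} {1,2} {1,2,3} _ (by decide) rfl,
    (by decide : (((({3} : Finset (Fin 6))) ×ˢ (({1,2} : Finset (Fin 6)))).filter (fun p => p.2 < p.1)).card = 2)]
  norm_num
lemma wd0_45 : wedge (bas {0}) (bas {4,5}) = (1 : ℝ) • bas {0,4,5} := by
  rw [wedge_bas' {0} {4,5} {0,4,5} _ (by decide) rfl,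
    (by decide : (((({0} : Finset (Fin 6))) ×ˢ (({4,5} : Finset (Fin 6)))).filter (fun p => p.2 < p.1)).card = 0)]
  norm_num
lemma wd4_02 : wedge (bas {4}) (bas {0,2}) = (1 : ℝ) • bas {0,2,4} := by
  rw [wedge_bas' {4} {0,2} {0,2,4} _ (by decide) rfl,
    (by decide : (((({4} : Finset (Fin 6))) ×ˢ (({0,2} : Finset (Fin 6)))).filter (fun p => p.2 < p.1)).card = 2)]
  norm_num
lemma wd1_35 : wedge (bas {1}) (bas {3,5}) = (1 : ℝ) • bas {1,3,5} := by
  rw [wedge_bas' {1} {3,5} {1,3,5} _ (by decide) rfl,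
    (by decide : (((({1} : Finset (Fin 6))) ×ˢ (({3,5} : Finset (Fin 6)))).filter (fun p => p.2 < p.1)).card = 0)]
  norm_num
lemma wd5_01 : wedge (bas {5}) (bas {0,1}) = (1 : ℝ) • bas {0,1,5} := by
  rw [wedge_bas' {5} {0,1} {0,1,5} _ (by decide) rfl,
    (by decide : (((({5} : Finset (Fin 6))) ×ˢ (({0,1} : Finset (Fin 6)))).filter (fun p => p.2 < p.1)).card = 2)]
  norm_num
lemma wd2_34 : wedge (bas {2}) (bas {3,4}) = (1 : ℝ) • bas {2,3,4} := by
  rw [wedge_bas' {2} {3,4} {2,3,4} _ (by decide) rfl,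
    (by decide : (((({2} : Finset (Fin 6))) ×ˢ (({3,4} : Finset (Fin 6)))).filter (fun p => p.2 < p.1)).card = 0)]
  norm_num

lemma d_bas03 : d (bas {0, 3}) = bas {1,2,3} - bas {0,4,5} := by
  rw [d_bas,
    Finset.sum_insert (by decide : (0:Fin 6) ∉ ({3}:Finset (Fin 6))), Finset.sum_singleton,
    (by decide : ({0,3}:Finset (Fin 6)).erase 0 = {3}),
    (by decide : ({0,3}:Finset (Fin 6)).erase 3 = {0}),
    (by decide : (({0,3}:Finset (Fin 6)).filter (fun s => s < 0)).card = 0),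
    (by decide : (({0,3}:Finset (Fin 6)).filter (fun s => s < 3)).card = 1),
    dg0, dg3, wd3_12, wd0_45]
  module

lemma d_bas14 : d (bas {1, 4}) = bas {1,3,5} - bas {0,2,4} := by
  rw [d_bas,
    Finset.sum_insert (by decide : (1:Fin 6) ∉ ({4}:Finset (Fin 6))), Finset.sum_singleton,
    (by decide : ({1,4}:Finset (Fin 6)).erase 1 = {4}),
    (by decide : ({1,4}:Finset (Fin 6)).erase 4 = {1}),
    (by decide : (({1,4}:Finset (Fin 6)).filter (fun s => s < 1)).card = 0),
    (by decide : (({1,4}:Finset (Fin 6)).filter (fun s => s < 4)).card = 1),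
    dg1, dg4, wedge_neg_right, wedge_neg_right, wd4_02, wd1_35]
  module

lemma d_bas25 : d (bas {2, 5}) = bas {0,1,5} - bas {2,3,4} := by
  rw [d_bas,
    Finset.sum_insert (by decide : (2:Fin 6) ∉ ({5}:Finset (Fin 6))), Finset.sum_singleton,
    (by decide : ({2,5}:Finset (Fin 6)).erase 2 = {5}),
    (by decide : ({2,5}:Finset (Fin 6)).erase 5 = {2}),
    (by decide : (({2,5}:Finset (Fin 6)).filter (fun s => s < 2)).card = 0),
    (by decide : (({2,5}:Finset (Fin 6)).filter (fun s => s < 5)).card = 1),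
    dg2, dg5, wd5_01, wd2_34]
  module

noncomputable def Pform : E :=
  bas {0,1,5} + bas {1,2,3} + bas {1,3,5} - bas {0,2,4} - bas {0,4,5} - bas {2,3,4}

lemma Pform_def : Pform =
    bas {0,1,5} + bas {1,2,3} + bas {1,3,5} - bas {0,2,4} - bas {0,4,5} - bas {2,3,4} := rfl

lemma rho_eq (α : ℝ) : psiP (omegaA α) = (α/3) • Pform := by
  rw [psiP, omegaA, d_smul, d_add, d_add, d_bas03, d_bas14, d_bas25, Pform_def]
  module

lemma c0_015 : contr (Pi.single (0 : Fin 6) (1:ℝ)) (bas {0,1,5}) = bas {1,5} := by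
  rw [contr_single_bas (1:ℝ) (by decide : (0 : Fin 6) ∈ ({0,1,5} : Finset (Fin 6))),
    (by decide : ({0,1,5} : Finset (Fin 6)).erase 0 = {1,5}),
    (by decide : ((({1,5} : Finset (Fin 6))).filter (fun s => s < (0 : Fin 6))).card = 0)]
  module
lemma c0_123 : contr (Pi.single (0 : Fin 6) (1:ℝ)) (bas {1,2,3}) = 0 :=
  contr_single_bas_zero (1:ℝ) (by decide)
lemma c0_135 : contr (Pi.single (0 : Fin 6) (1:ℝ)) (bas {1,3,5}) = 0 :=
  contr_single_bas_zero (1:ℝ) (by decide)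
lemma c0_024 : contr (Pi.single (0 : Fin 6) (1:ℝ)) (bas {0,2,4}) = bas {2,4} := by
  rw [contr_single_bas (1:ℝ) (by decide : (0 : Fin 6) ∈ ({0,2,4} : Finset (Fin 6))),
    (by decide : ({0,2,4} : Finset (Fin 6)).erase 0 = {2,4}),
    (by decide : ((({2,4} : Finset (Fin 6))).filter (fun s => s < (0 : Fin 6))).card = 0)]
  module
lemma c0_045 : contr (Pi.single (0 : Fin 6) (1:ℝ)) (bas {0,4,5}) = bas {4,5} := by
  rw [contr_single_bas (1:ℝ) (by decide : (0 : Fin 6) ∈ ({0,4,5} : Finset (Fin 6))),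
    (by decide : ({0,4,5} : Finset (Fin 6)).erase 0 = {4,5}),
    (by decide : ((({4,5} : Finset (Fin 6))).filter (fun s => s < (0 : Fin 6))).card = 0)]
  module
lemma c0_234 : contr (Pi.single (0 : Fin 6) (1:ℝ)) (bas {2,3,4}) = 0 :=
  contr_single_bas_zero (1:ℝ) (by decide)

lemma c1_015 : contr (Pi.single (1 : Fin 6) (1:ℝ)) (bas {0,1,5}) = -bas {0,5} := by
  rw [contr_single_bas (1:ℝ) (by decide : (1 : Fin 6) ∈ ({0,1,5} : Finset (Fin 6))),
    (by decide : ({0,1,5} : Finset (Fin 6)).erase 1 = {0,5}),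
    (by decide : ((({0,5} : Finset (Fin 6))).filter (fun s => s < (1 : Fin 6))).card = 1)]
  module
lemma c1_123 : contr (Pi.single (1 : Fin 6) (1:ℝ)) (bas {1,2,3}) = bas {2,3} := by
  rw [contr_single_bas (1:ℝ) (by decide : (1 : Fin 6) ∈ ({1,2,3} : Finset (Fin 6))),
    (by decide : ({1,2,3} : Finset (Fin 6)).erase 1 = {2,3}),
    (by decide : ((({2,3} : Finset (Fin 6))).filter (fun s => s < (1 : Fin 6))).card = 0)]
  module
lemma c1_135 : contr (Pi.single (1 : Fin 6) (1:ℝ)) (bas {1,3,5}) = bas {3,5} := by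
  rw [contr_single_bas (1:ℝ) (by decide : (1 : Fin 6) ∈ ({1,3,5} : Finset (Fin 6))),
    (by decide : ({1,3,5} : Finset (Fin 6)).erase 1 = {3,5}),
    (by decide : ((({3,5} : Finset (Fin 6))).filter (fun s => s < (1 : Fin 6))).card = 0)]
  module
lemma c1_024 : contr (Pi.single (1 : Fin 6) (1:ℝ)) (bas {0,2,4}) = 0 :=
  contr_single_bas_zero (1:ℝ) (by decide)
lemma c1_045 : contr (Pi.single (1 : Fin 6) (1:ℝ)) (bas {0,4,5}) = 0 :=
  contr_single_bas_zero (1:ℝ) (by decide)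
lemma c1_234 : contr (Pi.single (1 : Fin 6) (1:ℝ)) (bas {2,3,4}) = 0 :=
  contr_single_bas_zero (1:ℝ) (by decide)

lemma c2_015 : contr (Pi.single (2 : Fin 6) (1:ℝ)) (bas {0,1,5}) = 0 :=
  contr_single_bas_zero (1:ℝ) (by decide)
lemma c2_123 : contr (Pi.single (2 : Fin 6) (1:ℝ)) (bas {1,2,3}) = -bas {1,3} := by
  rw [contr_single_bas (1:ℝ) (by decide : (2 : Fin 6) ∈ ({1,2,3} : Finset (Fin 6))),
    (by decide : ({1,2,3} : Finset (Fin 6)).erase 2 = {1,3}),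
    (by decide : ((({1,3} : Finset (Fin 6))).filter (fun s => s < (2 : Fin 6))).card = 1)]
  module
lemma c2_135 : contr (Pi.single (2 : Fin 6) (1:ℝ)) (bas {1,3,5}) = 0 :=
  contr_single_bas_zero (1:ℝ) (by decide)
lemma c2_024 : contr (Pi.single (2 : Fin 6) (1:ℝ)) (bas {0,2,4}) = -bas {0,4} := by
  rw [contr_single_bas (1:ℝ) (by decide : (2 : Fin 6) ∈ ({0,2,4} : Finset (Fin 6))),
    (by decide : ({0,2,4} : Finset (Fin 6)).erase 2 = {0,4}),
    (by decide : ((({0,4} : Finset (Fin 6))).filter (fun s => s < (2 : Fin 6))).card = 1)]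
  module
lemma c2_045 : contr (Pi.single (2 : Fin 6) (1:ℝ)) (bas {0,4,5}) = 0 :=
  contr_single_bas_zero (1:ℝ) (by decide)
lemma c2_234 : contr (Pi.single (2 : Fin 6) (1:ℝ)) (bas {2,3,4}) = bas {3,4} := by
  rw [contr_single_bas (1:ℝ) (by decide : (2 : Fin 6) ∈ ({2,3,4} : Finset (Fin 6))),
    (by decide : ({2,3,4} : Finset (Fin 6)).erase 2 = {3,4}),
    (by decide : ((({3,4} : Finset (Fin 6))).filter (fun s => s < (2 : Fin 6))).card = 0)]
  module

lemma c3_015 : contr (Pi.single (3 : Fin 6) (1:ℝ)) (bas {0,1,5}) = 0 :=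
  contr_single_bas_zero (1:ℝ) (by decide)
lemma c3_123 : contr (Pi.single (3 : Fin 6) (1:ℝ)) (bas {1,2,3}) = bas {1,2} := by
  rw [contr_single_bas (1:ℝ) (by decide : (3 : Fin 6) ∈ ({1,2,3} : Finset (Fin 6))),
    (by decide : ({1,2,3} : Finset (Fin 6)).erase 3 = {1,2}),
    (by decide : ((({1,2} : Finset (Fin 6))).filter (fun s => s < (3 : Fin 6))).card = 2)]
  module
lemma c3_135 : contr (Pi.single (3 : Fin 6) (1:ℝ)) (bas {1,3,5}) = -bas {1,5} := by
  rw [contr_single_bas (1:ℝ) (by decide : (3 : Fin 6) ∈ ({1,3,5} : Finset (Fin 6))),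
    (by decide : ({1,3,5} : Finset (Fin 6)).erase 3 = {1,5}),
    (by decide : ((({1,5} : Finset (Fin 6))).filter (fun s => s < (3 : Fin 6))).card = 1)]
  module
lemma c3_024 : contr (Pi.single (3 : Fin 6) (1:ℝ)) (bas {0,2,4}) = 0 :=
  contr_single_bas_zero (1:ℝ) (by decide)
lemma c3_045 : contr (Pi.single (3 : Fin 6) (1:ℝ)) (bas {0,4,5}) = 0 :=
  contr_single_bas_zero (1:ℝ) (by decide)
lemma c3_234 : contr (Pi.single (3 : Fin 6) (1:ℝ)) (bas {2,3,4}) = -bas {2,4} := by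
  rw [contr_single_bas (1:ℝ) (by decide : (3 : Fin 6) ∈ ({2,3,4} : Finset (Fin 6))),
    (by decide : ({2,3,4} : Finset (Fin 6)).erase 3 = {2,4}),
    (by decide : ((({2,4} : Finset (Fin 6))).filter (fun s => s < (3 : Fin 6))).card = 1)]
  module

lemma c4_015 : contr (Pi.single (4 : Fin 6) (1:ℝ)) (bas {0,1,5}) = 0 :=
  contr_single_bas_zero (1:ℝ) (by decide)
lemma c4_123 : contr (Pi.single (4 : Fin 6) (1:ℝ)) (bas {1,2,3}) = 0 :=
  contr_single_bas_zero (1:ℝ) (by decide)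
lemma c4_135 : contr (Pi.single (4 : Fin 6) (1:ℝ)) (bas {1,3,5}) = 0 :=
  contr_single_bas_zero (1:ℝ) (by decide)
lemma c4_024 : contr (Pi.single (4 : Fin 6) (1:ℝ)) (bas {0,2,4}) = bas {0,2} := by
  rw [contr_single_bas (1:ℝ) (by decide : (4 : Fin 6) ∈ ({0,2,4} : Finset (Fin 6))),
    (by decide : ({0,2,4} : Finset (Fin 6)).erase 4 = {0,2}),
    (by decide : ((({0,2} : Finset (Fin 6))).filter (fun s => s < (4 : Fin 6))).card = 2)]
  module
lemma c4_045 : contr (Pi.single (4 : Fin 6) (1:ℝ)) (bas {0,4,5}) = -bas {0,5} := by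
  rw [contr_single_bas (1:ℝ) (by decide : (4 : Fin 6) ∈ ({0,4,5} : Finset (Fin 6))),
    (by decide : ({0,4,5} : Finset (Fin 6)).erase 4 = {0,5}),
    (by decide : ((({0,5} : Finset (Fin 6))).filter (fun s => s < (4 : Fin 6))).card = 1)]
  module
lemma c4_234 : contr (Pi.single (4 : Fin 6) (1:ℝ)) (bas {2,3,4}) = bas {2,3} := by
  rw [contr_single_bas (1:ℝ) (by decide : (4 : Fin 6) ∈ ({2,3,4} : Finset (Fin 6))),
    (by decide : ({2,3,4} : Finset (Fin 6)).erase 4 = {2,3}),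
    (by decide : ((({2,3} : Finset (Fin 6))).filter (fun s => s < (4 : Fin 6))).card = 2)]
  module

lemma c5_015 : contr (Pi.single (5 : Fin 6) (1:ℝ)) (bas {0,1,5}) = bas {0,1} := by
  rw [contr_single_bas (1:ℝ) (by decide : (5 : Fin 6) ∈ ({0,1,5} : Finset (Fin 6))),
    (by decide : ({0,1,5} : Finset (Fin 6)).erase 5 = {0,1}),
    (by decide : ((({0,1} : Finset (Fin 6))).filter (fun s => s < (5 : Fin 6))).card = 2)]
  module
lemma c5_123 : contr (Pi.single (5 : Fin 6) (1:ℝ)) (bas {1,2,3}) = 0 :=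
  contr_single_bas_zero (1:ℝ) (by decide)
lemma c5_135 : contr (Pi.single (5 : Fin 6) (1:ℝ)) (bas {1,3,5}) = bas {1,3} := by
  rw [contr_single_bas (1:ℝ) (by decide : (5 : Fin 6) ∈ ({1,3,5} : Finset (Fin 6))),
    (by decide : ({1,3,5} : Finset (Fin 6)).erase 5 = {1,3}),
    (by decide : ((({1,3} : Finset (Fin 6))).filter (fun s => s < (5 : Fin 6))).card = 2)]
  module
lemma c5_024 : contr (Pi.single (5 : Fin 6) (1:ℝ)) (bas {0,2,4}) = 0 :=
  contr_single_bas_zero (1:ℝ) (by decide)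
lemma c5_045 : contr (Pi.single (5 : Fin 6) (1:ℝ)) (bas {0,4,5}) = bas {0,4} := by
  rw [contr_single_bas (1:ℝ) (by decide : (5 : Fin 6) ∈ ({0,4,5} : Finset (Fin 6))),
    (by decide : ({0,4,5} : Finset (Fin 6)).erase 5 = {0,4}),
    (by decide : ((({0,4} : Finset (Fin 6))).filter (fun s => s < (5 : Fin 6))).card = 2)]
  module
lemma c5_234 : contr (Pi.single (5 : Fin 6) (1:ℝ)) (bas {2,3,4}) = 0 :=
  contr_single_bas_zero (1:ℝ) (by decide)

lemma sig0 : contr (Pi.single (0 : Fin 6) (1:ℝ)) Pform = bas {1,5} - bas {2,4} - bas {4,5} := by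
  rw [Pform_def]
  simp only [contr_add, contr_sub, c0_015, c0_123, c0_135, c0_024, c0_045, c0_234]
  module

lemma sig1 : contr (Pi.single (1 : Fin 6) (1:ℝ)) Pform = -bas {0,5} + bas {2,3} + bas {3,5} := by
  rw [Pform_def]
  simp only [contr_add, contr_sub, c1_015, c1_123, c1_135, c1_024, c1_045, c1_234]
  module

lemma sig2 : contr (Pi.single (2 : Fin 6) (1:ℝ)) Pform = -bas {1,3} + bas {0,4} - bas {3,4} := by
  rw [Pform_def]
  simp only [contr_add, contr_sub, c2_015, c2_123, c2_135, c2_024, c2_045, c2_234]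
  module

lemma sig3 : contr (Pi.single (3 : Fin 6) (1:ℝ)) Pform = bas {1,2} - bas {1,5} + bas {2,4} := by
  rw [Pform_def]
  simp only [contr_add, contr_sub, c3_015, c3_123, c3_135, c3_024, c3_045, c3_234]
  module

lemma sig4 : contr (Pi.single (4 : Fin 6) (1:ℝ)) Pform = -bas {0,2} + bas {0,5} - bas {2,3} := by
  rw [Pform_def]
  simp only [contr_add, contr_sub, c4_015, c4_123, c4_135, c4_024, c4_045, c4_234]
  module

lemma sig5 : contr (Pi.single (5 : Fin 6) (1:ℝ)) Pform = bas {0,1} + bas {1,3} - bas {0,4} := by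
  rw [Pform_def]
  simp only [contr_add, contr_sub, c5_015, c5_123, c5_135, c5_024, c5_045, c5_234]
  module

lemma w15_015 : wedge (bas {1,5}) (bas {0,1,5}) = 0 :=
  wedge_bas_zero _ _ (by decide)
lemma w15_123 : wedge (bas {1,5}) (bas {1,2,3}) = 0 :=
  wedge_bas_zero _ _ (by decide)
lemma w15_135 : wedge (bas {1,5}) (bas {1,3,5}) = 0 :=
  wedge_bas_zero _ _ (by decide)
lemma w15_024 : wedge (bas {1,5}) (bas {0,2,4}) = (1 : ℝ) • bas {0,1,2,4,5} := by
  rw [wedge_bas' {1,5} {0,2,4} {0,1,2,4,5} _ (by decide) rfl,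
    (by decide : (((({1,5} : Finset (Fin 6))) ×ˢ (({0,2,4} : Finset (Fin 6)))).filter (fun p => p.2 < p.1)).card = 4)]
  norm_num
lemma w15_045 : wedge (bas {1,5}) (bas {0,4,5}) = 0 :=
  wedge_bas_zero _ _ (by decide)
lemma w15_234 : wedge (bas {1,5}) (bas {2,3,4}) = (-1 : ℝ) • bas {1,2,3,4,5} := by
  rw [wedge_bas' {1,5} {2,3,4} {1,2,3,4,5} _ (by decide) rfl,
    (by decide : (((({1,5} : Finset (Fin 6))) ×ˢ (({2,3,4} : Finset (Fin 6)))).filter (fun p => p.2 < p.1)).card = 3)]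
  norm_num
lemma w24_015 : wedge (bas {2,4}) (bas {0,1,5}) = (1 : ℝ) • bas {0,1,2,4,5} := by
  rw [wedge_bas' {2,4} {0,1,5} {0,1,2,4,5} _ (by decide) rfl,
    (by decide : (((({2,4} : Finset (Fin 6))) ×ˢ (({0,1,5} : Finset (Fin 6)))).filter (fun p => p.2 < p.1)).card = 4)]
  norm_num
lemma w24_123 : wedge (bas {2,4}) (bas {1,2,3}) = 0 :=
  wedge_bas_zero _ _ (by decide)
lemma w24_135 : wedge (bas {2,4}) (bas {1,3,5}) = (-1 : ℝ) • bas {1,2,3,4,5} := by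
  rw [wedge_bas' {2,4} {1,3,5} {1,2,3,4,5} _ (by decide) rfl,
    (by decide : (((({2,4} : Finset (Fin 6))) ×ˢ (({1,3,5} : Finset (Fin 6)))).filter (fun p => p.2 < p.1)).card = 3)]
  norm_num
lemma w24_024 : wedge (bas {2,4}) (bas {0,2,4}) = 0 :=
  wedge_bas_zero _ _ (by decide)
lemma w24_045 : wedge (bas {2,4}) (bas {0,4,5}) = 0 :=
  wedge_bas_zero _ _ (by decide)
lemma w24_234 : wedge (bas {2,4}) (bas {2,3,4}) = 0 :=
  wedge_bas_zero _ _ (by decide)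
lemma w45_015 : wedge (bas {4,5}) (bas {0,1,5}) = 0 :=
  wedge_bas_zero _ _ (by decide)
lemma w45_123 : wedge (bas {4,5}) (bas {1,2,3}) = (1 : ℝ) • bas {1,2,3,4,5} := by
  rw [wedge_bas' {4,5} {1,2,3} {1,2,3,4,5} _ (by decide) rfl,
    (by decide : (((({4,5} : Finset (Fin 6))) ×ˢ (({1,2,3} : Finset (Fin 6)))).filter (fun p => p.2 < p.1)).card = 6)]
  norm_num
lemma w45_135 : wedge (bas {4,5}) (bas {1,3,5}) = 0 :=
  wedge_bas_zero _ _ (by decide)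
lemma w45_024 : wedge (bas {4,5}) (bas {0,2,4}) = 0 :=
  wedge_bas_zero _ _ (by decide)
lemma w45_045 : wedge (bas {4,5}) (bas {0,4,5}) = 0 :=
  wedge_bas_zero _ _ (by decide)
lemma w45_234 : wedge (bas {4,5}) (bas {2,3,4}) = 0 :=
  wedge_bas_zero _ _ (by decide)
lemma w05_015 : wedge (bas {0,5}) (bas {0,1,5}) = 0 :=
  wedge_bas_zero _ _ (by decide)
lemma w05_123 : wedge (bas {0,5}) (bas {1,2,3}) = (-1 : ℝ) • bas {0,1,2,3,5} := by
  rw [wedge_bas' {0,5} {1,2,3} {0,1,2,3,5} _ (by decide) rfl,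
    (by decide : (((({0,5} : Finset (Fin 6))) ×ˢ (({1,2,3} : Finset (Fin 6)))).filter (fun p => p.2 < p.1)).card = 3)]
  norm_num
lemma w05_135 : wedge (bas {0,5}) (bas {1,3,5}) = 0 :=
  wedge_bas_zero _ _ (by decide)
lemma w05_024 : wedge (bas {0,5}) (bas {0,2,4}) = 0 :=
  wedge_bas_zero _ _ (by decide)
lemma w05_045 : wedge (bas {0,5}) (bas {0,4,5}) = 0 :=
  wedge_bas_zero _ _ (by decide)
lemma w05_234 : wedge (bas {0,5}) (bas {2,3,4}) = (-1 : ℝ) • bas {0,2,3,4,5} := by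
  rw [wedge_bas' {0,5} {2,3,4} {0,2,3,4,5} _ (by decide) rfl,
    (by decide : (((({0,5} : Finset (Fin 6))) ×ˢ (({2,3,4} : Finset (Fin 6)))).filter (fun p => p.2 < p.1)).card = 3)]
  norm_num
lemma w23_015 : wedge (bas {2,3}) (bas {0,1,5}) = (1 : ℝ) • bas {0,1,2,3,5} := by
  rw [wedge_bas' {2,3} {0,1,5} {0,1,2,3,5} _ (by decide) rfl,
    (by decide : (((({2,3} : Finset (Fin 6))) ×ˢ (({0,1,5} : Finset (Fin 6)))).filter (fun p => p.2 < p.1)).card = 4)]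
  norm_num
lemma w23_123 : wedge (bas {2,3}) (bas {1,2,3}) = 0 :=
  wedge_bas_zero _ _ (by decide)
lemma w23_135 : wedge (bas {2,3}) (bas {1,3,5}) = 0 :=
  wedge_bas_zero _ _ (by decide)
lemma w23_024 : wedge (bas {2,3}) (bas {0,2,4}) = 0 :=
  wedge_bas_zero _ _ (by decide)
lemma w23_045 : wedge (bas {2,3}) (bas {0,4,5}) = (1 : ℝ) • bas {0,2,3,4,5} := by
  rw [wedge_bas' {2,3} {0,4,5} {0,2,3,4,5} _ (by decide) rfl,
    (by decide : (((({2,3} : Finset (Fin 6))) ×ˢ (({0,4,5} : Finset (Fin 6)))).filter (fun p => p.2 < p.1)).card = 2)]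
  norm_num
lemma w23_234 : wedge (bas {2,3}) (bas {2,3,4}) = 0 :=
  wedge_bas_zero _ _ (by decide)
lemma w35_015 : wedge (bas {3,5}) (bas {0,1,5}) = 0 :=
  wedge_bas_zero _ _ (by decide)
lemma w35_123 : wedge (bas {3,5}) (bas {1,2,3}) = 0 :=
  wedge_bas_zero _ _ (by decide)
lemma w35_135 : wedge (bas {3,5}) (bas {1,3,5}) = 0 :=
  wedge_bas_zero _ _ (by decide)
lemma w35_024 : wedge (bas {3,5}) (bas {0,2,4}) = (-1 : ℝ) • bas {0,2,3,4,5} := by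
  rw [wedge_bas' {3,5} {0,2,4} {0,2,3,4,5} _ (by decide) rfl,
    (by decide : (((({3,5} : Finset (Fin 6))) ×ˢ (({0,2,4} : Finset (Fin 6)))).filter (fun p => p.2 < p.1)).card = 5)]
  norm_num
lemma w35_045 : wedge (bas {3,5}) (bas {0,4,5}) = 0 :=
  wedge_bas_zero _ _ (by decide)
lemma w35_234 : wedge (bas {3,5}) (bas {2,3,4}) = 0 :=
  wedge_bas_zero _ _ (by decide)
lemma w13_015 : wedge (bas {1,3}) (bas {0,1,5}) = 0 :=
  wedge_bas_zero _ _ (by decide)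
lemma w13_123 : wedge (bas {1,3}) (bas {1,2,3}) = 0 :=
  wedge_bas_zero _ _ (by decide)
lemma w13_135 : wedge (bas {1,3}) (bas {1,3,5}) = 0 :=
  wedge_bas_zero _ _ (by decide)
lemma w13_024 : wedge (bas {1,3}) (bas {0,2,4}) = (-1 : ℝ) • bas {0,1,2,3,4} := by
  rw [wedge_bas' {1,3} {0,2,4} {0,1,2,3,4} _ (by decide) rfl,
    (by decide : (((({1,3} : Finset (Fin 6))) ×ˢ (({0,2,4} : Finset (Fin 6)))).filter (fun p => p.2 < p.1)).card = 3)]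
  norm_num
lemma w13_045 : wedge (bas {1,3}) (bas {0,4,5}) = (1 : ℝ) • bas {0,1,3,4,5} := by
  rw [wedge_bas' {1,3} {0,4,5} {0,1,3,4,5} _ (by decide) rfl,
    (by decide : (((({1,3} : Finset (Fin 6))) ×ˢ (({0,4,5} : Finset (Fin 6)))).filter (fun p => p.2 < p.1)).card = 2)]
  norm_num
lemma w13_234 : wedge (bas {1,3}) (bas {2,3,4}) = 0 :=
  wedge_bas_zero _ _ (by decide)
lemma w04_015 : wedge (bas {0,4}) (bas {0,1,5}) = 0 :=
  wedge_bas_zero _ _ (by decide)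
lemma w04_123 : wedge (bas {0,4}) (bas {1,2,3}) = (-1 : ℝ) • bas {0,1,2,3,4} := by
  rw [wedge_bas' {0,4} {1,2,3} {0,1,2,3,4} _ (by decide) rfl,
    (by decide : (((({0,4} : Finset (Fin 6))) ×ˢ (({1,2,3} : Finset (Fin 6)))).filter (fun p => p.2 < p.1)).card = 3)]
  norm_num
lemma w04_135 : wedge (bas {0,4}) (bas {1,3,5}) = (1 : ℝ) • bas {0,1,3,4,5} := by
  rw [wedge_bas' {0,4} {1,3,5} {0,1,3,4,5} _ (by decide) rfl,
    (by decide : (((({0,4} : Finset (Fin 6))) ×ˢ (({1,3,5} : Finset (Fin 6)))).filter (fun p => p.2 < p.1)).card = 2)]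
  norm_num
lemma w04_024 : wedge (bas {0,4}) (bas {0,2,4}) = 0 :=
  wedge_bas_zero _ _ (by decide)
lemma w04_045 : wedge (bas {0,4}) (bas {0,4,5}) = 0 :=
  wedge_bas_zero _ _ (by decide)
lemma w04_234 : wedge (bas {0,4}) (bas {2,3,4}) = 0 :=
  wedge_bas_zero _ _ (by decide)
lemma w34_015 : wedge (bas {3,4}) (bas {0,1,5}) = (1 : ℝ) • bas {0,1,3,4,5} := by
  rw [wedge_bas' {3,4} {0,1,5} {0,1,3,4,5} _ (by decide) rfl,
    (by decide : (((({3,4} : Finset (Fin 6))) ×ˢ (({0,1,5} : Finset (Fin 6)))).filter (fun p => p.2 < p.1)).card = 4)]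
  norm_num
lemma w34_123 : wedge (bas {3,4}) (bas {1,2,3}) = 0 :=
  wedge_bas_zero _ _ (by decide)
lemma w34_135 : wedge (bas {3,4}) (bas {1,3,5}) = 0 :=
  wedge_bas_zero _ _ (by decide)
lemma w34_024 : wedge (bas {3,4}) (bas {0,2,4}) = 0 :=
  wedge_bas_zero _ _ (by decide)
lemma w34_045 : wedge (bas {3,4}) (bas {0,4,5}) = 0 :=
  wedge_bas_zero _ _ (by decide)
lemma w34_234 : wedge (bas {3,4}) (bas {2,3,4}) = 0 :=
  wedge_bas_zero _ _ (by decide)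
lemma w12_015 : wedge (bas {1,2}) (bas {0,1,5}) = 0 :=
  wedge_bas_zero _ _ (by decide)
lemma w12_123 : wedge (bas {1,2}) (bas {1,2,3}) = 0 :=
  wedge_bas_zero _ _ (by decide)
lemma w12_135 : wedge (bas {1,2}) (bas {1,3,5}) = 0 :=
  wedge_bas_zero _ _ (by decide)
lemma w12_024 : wedge (bas {1,2}) (bas {0,2,4}) = 0 :=
  wedge_bas_zero _ _ (by decide)
lemma w12_045 : wedge (bas {1,2}) (bas {0,4,5}) = (1 : ℝ) • bas {0,1,2,4,5} := by
  rw [wedge_bas' {1,2} {0,4,5} {0,1,2,4,5} _ (by decide) rfl,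
    (by decide : (((({1,2} : Finset (Fin 6))) ×ˢ (({0,4,5} : Finset (Fin 6)))).filter (fun p => p.2 < p.1)).card = 2)]
  norm_num
lemma w12_234 : wedge (bas {1,2}) (bas {2,3,4}) = 0 :=
  wedge_bas_zero _ _ (by decide)
lemma w02_015 : wedge (bas {0,2}) (bas {0,1,5}) = 0 :=
  wedge_bas_zero _ _ (by decide)
lemma w02_123 : wedge (bas {0,2}) (bas {1,2,3}) = 0 :=
  wedge_bas_zero _ _ (by decide)
lemma w02_135 : wedge (bas {0,2}) (bas {1,3,5}) = (-1 : ℝ) • bas {0,1,2,3,5} := by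
  rw [wedge_bas' {0,2} {1,3,5} {0,1,2,3,5} _ (by decide) rfl,
    (by decide : (((({0,2} : Finset (Fin 6))) ×ˢ (({1,3,5} : Finset (Fin 6)))).filter (fun p => p.2 < p.1)).card = 1)]
  norm_num
lemma w02_024 : wedge (bas {0,2}) (bas {0,2,4}) = 0 :=
  wedge_bas_zero _ _ (by decide)
lemma w02_045 : wedge (bas {0,2}) (bas {0,4,5}) = 0 :=
  wedge_bas_zero _ _ (by decide)
lemma w02_234 : wedge (bas {0,2}) (bas {2,3,4}) = 0 :=
  wedge_bas_zero _ _ (by decide)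
lemma w01_015 : wedge (bas {0,1}) (bas {0,1,5}) = 0 :=
  wedge_bas_zero _ _ (by decide)
lemma w01_123 : wedge (bas {0,1}) (bas {1,2,3}) = 0 :=
  wedge_bas_zero _ _ (by decide)
lemma w01_135 : wedge (bas {0,1}) (bas {1,3,5}) = 0 :=
  wedge_bas_zero _ _ (by decide)
lemma w01_024 : wedge (bas {0,1}) (bas {0,2,4}) = 0 :=
  wedge_bas_zero _ _ (by decide)
lemma w01_045 : wedge (bas {0,1}) (bas {0,4,5}) = 0 :=
  wedge_bas_zero _ _ (by decide)
lemma w01_234 : wedge (bas {0,1}) (bas {2,3,4}) = (1 : ℝ) • bas {0,1,2,3,4} := by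
  rw [wedge_bas' {0,1} {2,3,4} {0,1,2,3,4} _ (by decide) rfl,
    (by decide : (((({0,1} : Finset (Fin 6))) ×ˢ (({2,3,4} : Finset (Fin 6)))).filter (fun p => p.2 < p.1)).card = 0)]
  norm_num

lemma W0 : wedge (bas {1,5} - bas {2,4} - bas {4,5}) Pform = -(2 : ℝ) • bas {0,1,2,4,5} + bas {1,2,3,4,5} := by
  rw [Pform_def]
  simp only [wedge_add_left, wedge_sub_left, wedge_neg_left, wedge_add_right, wedge_sub_right,
    w15_015, w15_024, w15_045, w15_123, w15_135, w15_234, w24_015, w24_024, w24_045, w24_123, w24_135, w24_234, w45_015, w45_024, w45_045, w45_123, w45_135, w45_234]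
  module

lemma W1 : wedge (-bas {0,5} + bas {2,3} + bas {3,5}) Pform = (2 : ℝ) • bas {0,1,2,3,5} - bas {0,2,3,4,5} := by
  rw [Pform_def]
  simp only [wedge_add_left, wedge_sub_left, wedge_neg_left, wedge_add_right, wedge_sub_right,
    w05_015, w05_024, w05_045, w05_123, w05_135, w05_234, w23_015, w23_024, w23_045, w23_123, w23_135, w23_234, w35_015, w35_024, w35_045, w35_123, w35_135, w35_234]
  module

lemma W2 : wedge (-bas {1,3} + bas {0,4} - bas {3,4}) Pform = -(2 : ℝ) • bas {0,1,2,3,4} + bas {0,1,3,4,5} := by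
  rw [Pform_def]
  simp only [wedge_add_left, wedge_sub_left, wedge_neg_left, wedge_add_right, wedge_sub_right,
    w04_015, w04_024, w04_045, w04_123, w04_135, w04_234, w13_015, w13_024, w13_045, w13_123, w13_135, w13_234, w34_015, w34_024, w34_045, w34_123, w34_135, w34_234]
  module

lemma W3 : wedge (bas {1,2} - bas {1,5} + bas {2,4}) Pform = bas {0,1,2,4,5} - (2 : ℝ) • bas {1,2,3,4,5} := by
  rw [Pform_def]
  simp only [wedge_add_left, wedge_sub_left, wedge_neg_left, wedge_add_right, wedge_sub_right,
    w12_015, w12_024, w12_045, w12_123, w12_135, w12_234, w15_015, w15_024, w15_045, w15_123, w15_135, w15_234, w24_015, w24_024, w24_045, w24_123, w24_135, w24_234]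
  module

lemma W4 : wedge (-bas {0,2} + bas {0,5} - bas {2,3}) Pform = -bas {0,1,2,3,5} + (2 : ℝ) • bas {0,2,3,4,5} := by
  rw [Pform_def]
  simp only [wedge_add_left, wedge_sub_left, wedge_neg_left, wedge_add_right, wedge_sub_right,
    w02_015, w02_024, w02_045, w02_123, w02_135, w02_234, w05_015, w05_024, w05_045, w05_123, w05_135, w05_234, w23_015, w23_024, w23_045, w23_123, w23_135, w23_234]
  module

lemma W5 : wedge (bas {0,1} + bas {1,3} - bas {0,4}) Pform = bas {0,1,2,3,4} - (2 : ℝ) • bas {0,1,3,4,5} := by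
  rw [Pform_def]
  simp only [wedge_add_left, wedge_sub_left, wedge_neg_left, wedge_add_right, wedge_sub_right,
    w01_015, w01_024, w01_045, w01_123, w01_135, w01_234, w04_015, w04_024, w04_045, w04_123, w04_135, w04_234, w13_015, w13_024, w13_045, w13_123, w13_135, w13_234]
  module


/-- For `ω = α(e¹⁴ + e²⁵ + e³⁶)` on `𝔰𝔲(2) ⊕ 𝔰𝔲(2)` one has
`λ((1/3)dω) = -(1/27)α⁴`; in particular `λ((1/3)dω) < 0` for `α ≠ 0`, so there is no
left-invariant nearly para-Kähler structure of non-zero type on Lie groups with Lie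
algebra `𝔰𝔲(2) ⊕ 𝔰𝔲(2)`. -/
theorem stmt_10 (α : ℝ) (K : Matrix (Fin 6) (Fin 6) ℝ) (hK : IsKrho (psiP (omegaA α)) K) :
    lamK K = -(1 / 27) * α ^ 4 ∧ (α ≠ 0 → lamK K < 0) := by
  have h0 := hK (Pi.single (0 : Fin 6) (1:ℝ))
  rw [rho_eq, contr_smul, wedge_smul_left, wedge_smul_right, smul_smul, sig0, W0, Matrix.mulVec_single_one, Matrix.col_apply'] at h0
  have h1 := hK (Pi.single (1 : Fin 6) (1:ℝ))
  rw [rho_eq, contr_smul, wedge_smul_left, wedge_smul_right, smul_smul, sig1, W1, Matrix.mulVec_single_one, Matrix.col_apply'] at h1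
  have h2 := hK (Pi.single (2 : Fin 6) (1:ℝ))
  rw [rho_eq, contr_smul, wedge_smul_left, wedge_smul_right, smul_smul, sig2, W2, Matrix.mulVec_single_one, Matrix.col_apply'] at h2
  have h3 := hK (Pi.single (3 : Fin 6) (1:ℝ))
  rw [rho_eq, contr_smul, wedge_smul_left, wedge_smul_right, smul_smul, sig3, W3, Matrix.mulVec_single_one, Matrix.col_apply'] at h3
  have h4 := hK (Pi.single (4 : Fin 6) (1:ℝ))
  rw [rho_eq, contr_smul, wedge_smul_left, wedge_smul_right, smul_smul, sig4, W4, Matrix.mulVec_single_one, Matrix.col_apply'] at h4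
  have h5 := hK (Pi.single (5 : Fin 6) (1:ℝ))
  rw [rho_eq, contr_smul, wedge_smul_left, wedge_smul_right, smul_smul, sig5, W5, Matrix.mulVec_single_one, Matrix.col_apply'] at h5
  have e00 := congrFun h0 (Finset.univ.erase (0 : Fin 6))
  rw [contr_vol, (by decide : Finset.univ.erase (0 : Fin 6) = ({1,2,3,4,5} : Finset (Fin 6)))] at e00
  simp only [Pi.smul_apply, Pi.add_apply, Pi.sub_apply, Pi.neg_apply, bas, smul_eq_mul,
    if_false, if_true, (show (((0 : Fin 6)) : ℕ) = 0 from rfl), (by decide : ¬ (({1,2,3,4,5} : Finset (Fin 6)) = {0,1,2,4,5})), (by decide : ({1,2,3,4,5} : Finset (Fin 6)) = {1,2,3,4,5})] at e00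
  have k00 : K 0 0 = (1/9 : ℝ) * α^2 := by linear_combination (-1 : ℝ) * e00
  have e01 := congrFun h1 (Finset.univ.erase (0 : Fin 6))
  rw [contr_vol, (by decide : Finset.univ.erase (0 : Fin 6) = ({1,2,3,4,5} : Finset (Fin 6)))] at e01
  simp only [Pi.smul_apply, Pi.add_apply, Pi.sub_apply, Pi.neg_apply, bas, smul_eq_mul,
    if_false, if_true, (show (((0 : Fin 6)) : ℕ) = 0 from rfl), (by decide : ¬ (({1,2,3,4,5} : Finset (Fin 6)) = {0,1,2,3,5})), (by decide : ¬ (({1,2,3,4,5} : Finset (Fin 6)) = {0,2,3,4,5}))] at e01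
  have k01 : K 0 1 = 0 := by linear_combination (-1 : ℝ) * e01
  have e02 := congrFun h2 (Finset.univ.erase (0 : Fin 6))
  rw [contr_vol, (by decide : Finset.univ.erase (0 : Fin 6) = ({1,2,3,4,5} : Finset (Fin 6)))] at e02
  simp only [Pi.smul_apply, Pi.add_apply, Pi.sub_apply, Pi.neg_apply, bas, smul_eq_mul,
    if_false, if_true, (show (((0 : Fin 6)) : ℕ) = 0 from rfl), (by decide : ¬ (({1,2,3,4,5} : Finset (Fin 6)) = {0,1,2,3,4})), (by decide : ¬ (({1,2,3,4,5} : Finset (Fin 6)) = {0,1,3,4,5}))] at e02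
  have k02 : K 0 2 = 0 := by linear_combination (-1 : ℝ) * e02
  have e03 := congrFun h3 (Finset.univ.erase (0 : Fin 6))
  rw [contr_vol, (by decide : Finset.univ.erase (0 : Fin 6) = ({1,2,3,4,5} : Finset (Fin 6)))] at e03
  simp only [Pi.smul_apply, Pi.add_apply, Pi.sub_apply, Pi.neg_apply, bas, smul_eq_mul,
    if_false, if_true, (show (((0 : Fin 6)) : ℕ) = 0 from rfl), (by decide : ¬ (({1,2,3,4,5} : Finset (Fin 6)) = {0,1,2,4,5})), (by decide : ({1,2,3,4,5} : Finset (Fin 6)) = {1,2,3,4,5})] at e03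
  have k03 : K 0 3 = (-2/9 : ℝ) * α^2 := by linear_combination (-1 : ℝ) * e03
  have e04 := congrFun h4 (Finset.univ.erase (0 : Fin 6))
  rw [contr_vol, (by decide : Finset.univ.erase (0 : Fin 6) = ({1,2,3,4,5} : Finset (Fin 6)))] at e04
  simp only [Pi.smul_apply, Pi.add_apply, Pi.sub_apply, Pi.neg_apply, bas, smul_eq_mul,
    if_false, if_true, (show (((0 : Fin 6)) : ℕ) = 0 from rfl), (by decide : ¬ (({1,2,3,4,5} : Finset (Fin 6)) = {0,1,2,3,5})), (by decide : ¬ (({1,2,3,4,5} : Finset (Fin 6)) = {0,2,3,4,5}))] at e04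
  have k04 : K 0 4 = 0 := by linear_combination (-1 : ℝ) * e04
  have e05 := congrFun h5 (Finset.univ.erase (0 : Fin 6))
  rw [contr_vol, (by decide : Finset.univ.erase (0 : Fin 6) = ({1,2,3,4,5} : Finset (Fin 6)))] at e05
  simp only [Pi.smul_apply, Pi.add_apply, Pi.sub_apply, Pi.neg_apply, bas, smul_eq_mul,
    if_false, if_true, (show (((0 : Fin 6)) : ℕ) = 0 from rfl), (by decide : ¬ (({1,2,3,4,5} : Finset (Fin 6)) = {0,1,2,3,4})), (by decide : ¬ (({1,2,3,4,5} : Finset (Fin 6)) = {0,1,3,4,5}))] at e05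
  have k05 : K 0 5 = 0 := by linear_combination (-1 : ℝ) * e05
  have e10 := congrFun h0 (Finset.univ.erase (1 : Fin 6))
  rw [contr_vol, (by decide : Finset.univ.erase (1 : Fin 6) = ({0,2,3,4,5} : Finset (Fin 6)))] at e10
  simp only [Pi.smul_apply, Pi.add_apply, Pi.sub_apply, Pi.neg_apply, bas, smul_eq_mul,
    if_false, if_true, (show (((1 : Fin 6)) : ℕ) = 1 from rfl), (by decide : ¬ (({0,2,3,4,5} : Finset (Fin 6)) = {0,1,2,4,5})), (by decide : ¬ (({0,2,3,4,5} : Finset (Fin 6)) = {1,2,3,4,5}))] at e10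
  have k10 : K 1 0 = 0 := by linear_combination (1 : ℝ) * e10
  have e11 := congrFun h1 (Finset.univ.erase (1 : Fin 6))
  rw [contr_vol, (by decide : Finset.univ.erase (1 : Fin 6) = ({0,2,3,4,5} : Finset (Fin 6)))] at e11
  simp only [Pi.smul_apply, Pi.add_apply, Pi.sub_apply, Pi.neg_apply, bas, smul_eq_mul,
    if_false, if_true, (show (((1 : Fin 6)) : ℕ) = 1 from rfl), (by decide : ¬ (({0,2,3,4,5} : Finset (Fin 6)) = {0,1,2,3,5})), (by decide : ({0,2,3,4,5} : Finset (Fin 6)) = {0,2,3,4,5})] at e11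
  have k11 : K 1 1 = (1/9 : ℝ) * α^2 := by linear_combination (1 : ℝ) * e11
  have e12 := congrFun h2 (Finset.univ.erase (1 : Fin 6))
  rw [contr_vol, (by decide : Finset.univ.erase (1 : Fin 6) = ({0,2,3,4,5} : Finset (Fin 6)))] at e12
  simp only [Pi.smul_apply, Pi.add_apply, Pi.sub_apply, Pi.neg_apply, bas, smul_eq_mul,
    if_false, if_true, (show (((1 : Fin 6)) : ℕ) = 1 from rfl), (by decide : ¬ (({0,2,3,4,5} : Finset (Fin 6)) = {0,1,2,3,4})), (by decide : ¬ (({0,2,3,4,5} : Finset (Fin 6)) = {0,1,3,4,5}))] at e12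
  have k12 : K 1 2 = 0 := by linear_combination (1 : ℝ) * e12
  have e13 := congrFun h3 (Finset.univ.erase (1 : Fin 6))
  rw [contr_vol, (by decide : Finset.univ.erase (1 : Fin 6) = ({0,2,3,4,5} : Finset (Fin 6)))] at e13
  simp only [Pi.smul_apply, Pi.add_apply, Pi.sub_apply, Pi.neg_apply, bas, smul_eq_mul,
    if_false, if_true, (show (((1 : Fin 6)) : ℕ) = 1 from rfl), (by decide : ¬ (({0,2,3,4,5} : Finset (Fin 6)) = {0,1,2,4,5})), (by decide : ¬ (({0,2,3,4,5} : Finset (Fin 6)) = {1,2,3,4,5}))] at e13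
  have k13 : K 1 3 = 0 := by linear_combination (1 : ℝ) * e13
  have e14 := congrFun h4 (Finset.univ.erase (1 : Fin 6))
  rw [contr_vol, (by decide : Finset.univ.erase (1 : Fin 6) = ({0,2,3,4,5} : Finset (Fin 6)))] at e14
  simp only [Pi.smul_apply, Pi.add_apply, Pi.sub_apply, Pi.neg_apply, bas, smul_eq_mul,
    if_false, if_true, (show (((1 : Fin 6)) : ℕ) = 1 from rfl), (by decide : ¬ (({0,2,3,4,5} : Finset (Fin 6)) = {0,1,2,3,5})), (by decide : ({0,2,3,4,5} : Finset (Fin 6)) = {0,2,3,4,5})] at e14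
  have k14 : K 1 4 = (-2/9 : ℝ) * α^2 := by linear_combination (1 : ℝ) * e14
  have e15 := congrFun h5 (Finset.univ.erase (1 : Fin 6))
  rw [contr_vol, (by decide : Finset.univ.erase (1 : Fin 6) = ({0,2,3,4,5} : Finset (Fin 6)))] at e15
  simp only [Pi.smul_apply, Pi.add_apply, Pi.sub_apply, Pi.neg_apply, bas, smul_eq_mul,
    if_false, if_true, (show (((1 : Fin 6)) : ℕ) = 1 from rfl), (by decide : ¬ (({0,2,3,4,5} : Finset (Fin 6)) = {0,1,2,3,4})), (by decide : ¬ (({0,2,3,4,5} : Finset (Fin 6)) = {0,1,3,4,5}))] at e15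
  have k15 : K 1 5 = 0 := by linear_combination (1 : ℝ) * e15
  have e20 := congrFun h0 (Finset.univ.erase (2 : Fin 6))
  rw [contr_vol, (by decide : Finset.univ.erase (2 : Fin 6) = ({0,1,3,4,5} : Finset (Fin 6)))] at e20
  simp only [Pi.smul_apply, Pi.add_apply, Pi.sub_apply, Pi.neg_apply, bas, smul_eq_mul,
    if_false, if_true, (show (((2 : Fin 6)) : ℕ) = 2 from rfl), (by decide : ¬ (({0,1,3,4,5} : Finset (Fin 6)) = {0,1,2,4,5})), (by decide : ¬ (({0,1,3,4,5} : Finset (Fin 6)) = {1,2,3,4,5}))] at e20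
  have k20 : K 2 0 = 0 := by linear_combination (-1 : ℝ) * e20
  have e21 := congrFun h1 (Finset.univ.erase (2 : Fin 6))
  rw [contr_vol, (by decide : Finset.univ.erase (2 : Fin 6) = ({0,1,3,4,5} : Finset (Fin 6)))] at e21
  simp only [Pi.smul_apply, Pi.add_apply, Pi.sub_apply, Pi.neg_apply, bas, smul_eq_mul,
    if_false, if_true, (show (((2 : Fin 6)) : ℕ) = 2 from rfl), (by decide : ¬ (({0,1,3,4,5} : Finset (Fin 6)) = {0,1,2,3,5})), (by decide : ¬ (({0,1,3,4,5} : Finset (Fin 6)) = {0,2,3,4,5}))] at e21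
  have k21 : K 2 1 = 0 := by linear_combination (-1 : ℝ) * e21
  have e22 := congrFun h2 (Finset.univ.erase (2 : Fin 6))
  rw [contr_vol, (by decide : Finset.univ.erase (2 : Fin 6) = ({0,1,3,4,5} : Finset (Fin 6)))] at e22
  simp only [Pi.smul_apply, Pi.add_apply, Pi.sub_apply, Pi.neg_apply, bas, smul_eq_mul,
    if_false, if_true, (show (((2 : Fin 6)) : ℕ) = 2 from rfl), (by decide : ¬ (({0,1,3,4,5} : Finset (Fin 6)) = {0,1,2,3,4})), (by decide : ({0,1,3,4,5} : Finset (Fin 6)) = {0,1,3,4,5})] at e22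
  have k22 : K 2 2 = (1/9 : ℝ) * α^2 := by linear_combination (-1 : ℝ) * e22
  have e23 := congrFun h3 (Finset.univ.erase (2 : Fin 6))
  rw [contr_vol, (by decide : Finset.univ.erase (2 : Fin 6) = ({0,1,3,4,5} : Finset (Fin 6)))] at e23
  simp only [Pi.smul_apply, Pi.add_apply, Pi.sub_apply, Pi.neg_apply, bas, smul_eq_mul,
    if_false, if_true, (show (((2 : Fin 6)) : ℕ) = 2 from rfl), (by decide : ¬ (({0,1,3,4,5} : Finset (Fin 6)) = {0,1,2,4,5})), (by decide : ¬ (({0,1,3,4,5} : Finset (Fin 6)) = {1,2,3,4,5}))] at e23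
  have k23 : K 2 3 = 0 := by linear_combination (-1 : ℝ) * e23
  have e24 := congrFun h4 (Finset.univ.erase (2 : Fin 6))
  rw [contr_vol, (by decide : Finset.univ.erase (2 : Fin 6) = ({0,1,3,4,5} : Finset (Fin 6)))] at e24
  simp only [Pi.smul_apply, Pi.add_apply, Pi.sub_apply, Pi.neg_apply, bas, smul_eq_mul,
    if_false, if_true, (show (((2 : Fin 6)) : ℕ) = 2 from rfl), (by decide : ¬ (({0,1,3,4,5} : Finset (Fin 6)) = {0,1,2,3,5})), (by decide : ¬ (({0,1,3,4,5} : Finset (Fin 6)) = {0,2,3,4,5}))] at e24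
  have k24 : K 2 4 = 0 := by linear_combination (-1 : ℝ) * e24
  have e25 := congrFun h5 (Finset.univ.erase (2 : Fin 6))
  rw [contr_vol, (by decide : Finset.univ.erase (2 : Fin 6) = ({0,1,3,4,5} : Finset (Fin 6)))] at e25
  simp only [Pi.smul_apply, Pi.add_apply, Pi.sub_apply, Pi.neg_apply, bas, smul_eq_mul,
    if_false, if_true, (show (((2 : Fin 6)) : ℕ) = 2 from rfl), (by decide : ¬ (({0,1,3,4,5} : Finset (Fin 6)) = {0,1,2,3,4})), (by decide : ({0,1,3,4,5} : Finset (Fin 6)) = {0,1,3,4,5})] at e25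
  have k25 : K 2 5 = (-2/9 : ℝ) * α^2 := by linear_combination (-1 : ℝ) * e25
  have e30 := congrFun h0 (Finset.univ.erase (3 : Fin 6))
  rw [contr_vol, (by decide : Finset.univ.erase (3 : Fin 6) = ({0,1,2,4,5} : Finset (Fin 6)))] at e30
  simp only [Pi.smul_apply, Pi.add_apply, Pi.sub_apply, Pi.neg_apply, bas, smul_eq_mul,
    if_false, if_true, (show (((3 : Fin 6)) : ℕ) = 3 from rfl), (by decide : ({0,1,2,4,5} : Finset (Fin 6)) = {0,1,2,4,5}), (by decide : ¬ (({0,1,2,4,5} : Finset (Fin 6)) = {1,2,3,4,5}))] at e30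
  have k30 : K 3 0 = (2/9 : ℝ) * α^2 := by linear_combination (1 : ℝ) * e30
  have e31 := congrFun h1 (Finset.univ.erase (3 : Fin 6))
  rw [contr_vol, (by decide : Finset.univ.erase (3 : Fin 6) = ({0,1,2,4,5} : Finset (Fin 6)))] at e31
  simp only [Pi.smul_apply, Pi.add_apply, Pi.sub_apply, Pi.neg_apply, bas, smul_eq_mul,
    if_false, if_true, (show (((3 : Fin 6)) : ℕ) = 3 from rfl), (by decide : ¬ (({0,1,2,4,5} : Finset (Fin 6)) = {0,1,2,3,5})), (by decide : ¬ (({0,1,2,4,5} : Finset (Fin 6)) = {0,2,3,4,5}))] at e31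
  have k31 : K 3 1 = 0 := by linear_combination (1 : ℝ) * e31
  have e32 := congrFun h2 (Finset.univ.erase (3 : Fin 6))
  rw [contr_vol, (by decide : Finset.univ.erase (3 : Fin 6) = ({0,1,2,4,5} : Finset (Fin 6)))] at e32
  simp only [Pi.smul_apply, Pi.add_apply, Pi.sub_apply, Pi.neg_apply, bas, smul_eq_mul,
    if_false, if_true, (show (((3 : Fin 6)) : ℕ) = 3 from rfl), (by decide : ¬ (({0,1,2,4,5} : Finset (Fin 6)) = {0,1,2,3,4})), (by decide : ¬ (({0,1,2,4,5} : Finset (Fin 6)) = {0,1,3,4,5}))] at e32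
  have k32 : K 3 2 = 0 := by linear_combination (1 : ℝ) * e32
  have e33 := congrFun h3 (Finset.univ.erase (3 : Fin 6))
  rw [contr_vol, (by decide : Finset.univ.erase (3 : Fin 6) = ({0,1,2,4,5} : Finset (Fin 6)))] at e33
  simp only [Pi.smul_apply, Pi.add_apply, Pi.sub_apply, Pi.neg_apply, bas, smul_eq_mul,
    if_false, if_true, (show (((3 : Fin 6)) : ℕ) = 3 from rfl), (by decide : ({0,1,2,4,5} : Finset (Fin 6)) = {0,1,2,4,5}), (by decide : ¬ (({0,1,2,4,5} : Finset (Fin 6)) = {1,2,3,4,5}))] at e33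
  have k33 : K 3 3 = (-1/9 : ℝ) * α^2 := by linear_combination (1 : ℝ) * e33
  have e34 := congrFun h4 (Finset.univ.erase (3 : Fin 6))
  rw [contr_vol, (by decide : Finset.univ.erase (3 : Fin 6) = ({0,1,2,4,5} : Finset (Fin 6)))] at e34
  simp only [Pi.smul_apply, Pi.add_apply, Pi.sub_apply, Pi.neg_apply, bas, smul_eq_mul,
    if_false, if_true, (show (((3 : Fin 6)) : ℕ) = 3 from rfl), (by decide : ¬ (({0,1,2,4,5} : Finset (Fin 6)) = {0,1,2,3,5})), (by decide : ¬ (({0,1,2,4,5} : Finset (Fin 6)) = {0,2,3,4,5}))] at e34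
  have k34 : K 3 4 = 0 := by linear_combination (1 : ℝ) * e34
  have e35 := congrFun h5 (Finset.univ.erase (3 : Fin 6))
  rw [contr_vol, (by decide : Finset.univ.erase (3 : Fin 6) = ({0,1,2,4,5} : Finset (Fin 6)))] at e35
  simp only [Pi.smul_apply, Pi.add_apply, Pi.sub_apply, Pi.neg_apply, bas, smul_eq_mul,
    if_false, if_true, (show (((3 : Fin 6)) : ℕ) = 3 from rfl), (by decide : ¬ (({0,1,2,4,5} : Finset (Fin 6)) = {0,1,2,3,4})), (by decide : ¬ (({0,1,2,4,5} : Finset (Fin 6)) = {0,1,3,4,5}))] at e35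
  have k35 : K 3 5 = 0 := by linear_combination (1 : ℝ) * e35
  have e40 := congrFun h0 (Finset.univ.erase (4 : Fin 6))
  rw [contr_vol, (by decide : Finset.univ.erase (4 : Fin 6) = ({0,1,2,3,5} : Finset (Fin 6)))] at e40
  simp only [Pi.smul_apply, Pi.add_apply, Pi.sub_apply, Pi.neg_apply, bas, smul_eq_mul,
    if_false, if_true, (show (((4 : Fin 6)) : ℕ) = 4 from rfl), (by decide : ¬ (({0,1,2,3,5} : Finset (Fin 6)) = {0,1,2,4,5})), (by decide : ¬ (({0,1,2,3,5} : Finset (Fin 6)) = {1,2,3,4,5}))] at e40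
  have k40 : K 4 0 = 0 := by linear_combination (-1 : ℝ) * e40
  have e41 := congrFun h1 (Finset.univ.erase (4 : Fin 6))
  rw [contr_vol, (by decide : Finset.univ.erase (4 : Fin 6) = ({0,1,2,3,5} : Finset (Fin 6)))] at e41
  simp only [Pi.smul_apply, Pi.add_apply, Pi.sub_apply, Pi.neg_apply, bas, smul_eq_mul,
    if_false, if_true, (show (((4 : Fin 6)) : ℕ) = 4 from rfl), (by decide : ({0,1,2,3,5} : Finset (Fin 6)) = {0,1,2,3,5}), (by decide : ¬ (({0,1,2,3,5} : Finset (Fin 6)) = {0,2,3,4,5}))] at e41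
  have k41 : K 4 1 = (2/9 : ℝ) * α^2 := by linear_combination (-1 : ℝ) * e41
  have e42 := congrFun h2 (Finset.univ.erase (4 : Fin 6))
  rw [contr_vol, (by decide : Finset.univ.erase (4 : Fin 6) = ({0,1,2,3,5} : Finset (Fin 6)))] at e42
  simp only [Pi.smul_apply, Pi.add_apply, Pi.sub_apply, Pi.neg_apply, bas, smul_eq_mul,
    if_false, if_true, (show (((4 : Fin 6)) : ℕ) = 4 from rfl), (by decide : ¬ (({0,1,2,3,5} : Finset (Fin 6)) = {0,1,2,3,4})), (by decide : ¬ (({0,1,2,3,5} : Finset (Fin 6)) = {0,1,3,4,5}))] at e42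
  have k42 : K 4 2 = 0 := by linear_combination (-1 : ℝ) * e42
  have e43 := congrFun h3 (Finset.univ.erase (4 : Fin 6))
  rw [contr_vol, (by decide : Finset.univ.erase (4 : Fin 6) = ({0,1,2,3,5} : Finset (Fin 6)))] at e43
  simp only [Pi.smul_apply, Pi.add_apply, Pi.sub_apply, Pi.neg_apply, bas, smul_eq_mul,
    if_false, if_true, (show (((4 : Fin 6)) : ℕ) = 4 from rfl), (by decide : ¬ (({0,1,2,3,5} : Finset (Fin 6)) = {0,1,2,4,5})), (by decide : ¬ (({0,1,2,3,5} : Finset (Fin 6)) = {1,2,3,4,5}))] at e43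
  have k43 : K 4 3 = 0 := by linear_combination (-1 : ℝ) * e43
  have e44 := congrFun h4 (Finset.univ.erase (4 : Fin 6))
  rw [contr_vol, (by decide : Finset.univ.erase (4 : Fin 6) = ({0,1,2,3,5} : Finset (Fin 6)))] at e44
  simp only [Pi.smul_apply, Pi.add_apply, Pi.sub_apply, Pi.neg_apply, bas, smul_eq_mul,
    if_false, if_true, (show (((4 : Fin 6)) : ℕ) = 4 from rfl), (by decide : ({0,1,2,3,5} : Finset (Fin 6)) = {0,1,2,3,5}), (by decide : ¬ (({0,1,2,3,5} : Finset (Fin 6)) = {0,2,3,4,5}))] at e44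
  have k44 : K 4 4 = (-1/9 : ℝ) * α^2 := by linear_combination (-1 : ℝ) * e44
  have e45 := congrFun h5 (Finset.univ.erase (4 : Fin 6))
  rw [contr_vol, (by decide : Finset.univ.erase (4 : Fin 6) = ({0,1,2,3,5} : Finset (Fin 6)))] at e45
  simp only [Pi.smul_apply, Pi.add_apply, Pi.sub_apply, Pi.neg_apply, bas, smul_eq_mul,
    if_false, if_true, (show (((4 : Fin 6)) : ℕ) = 4 from rfl), (by decide : ¬ (({0,1,2,3,5} : Finset (Fin 6)) = {0,1,2,3,4})), (by decide : ¬ (({0,1,2,3,5} : Finset (Fin 6)) = {0,1,3,4,5}))] at e45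
  have k45 : K 4 5 = 0 := by linear_combination (-1 : ℝ) * e45
  have e50 := congrFun h0 (Finset.univ.erase (5 : Fin 6))
  rw [contr_vol, (by decide : Finset.univ.erase (5 : Fin 6) = ({0,1,2,3,4} : Finset (Fin 6)))] at e50
  simp only [Pi.smul_apply, Pi.add_apply, Pi.sub_apply, Pi.neg_apply, bas, smul_eq_mul,
    if_false, if_true, (show (((5 : Fin 6)) : ℕ) = 5 from rfl), (by decide : ¬ (({0,1,2,3,4} : Finset (Fin 6)) = {0,1,2,4,5})), (by decide : ¬ (({0,1,2,3,4} : Finset (Fin 6)) = {1,2,3,4,5}))] at e50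
  have k50 : K 5 0 = 0 := by linear_combination (1 : ℝ) * e50
  have e51 := congrFun h1 (Finset.univ.erase (5 : Fin 6))
  rw [contr_vol, (by decide : Finset.univ.erase (5 : Fin 6) = ({0,1,2,3,4} : Finset (Fin 6)))] at e51
  simp only [Pi.smul_apply, Pi.add_apply, Pi.sub_apply, Pi.neg_apply, bas, smul_eq_mul,
    if_false, if_true, (show (((5 : Fin 6)) : ℕ) = 5 from rfl), (by decide : ¬ (({0,1,2,3,4} : Finset (Fin 6)) = {0,1,2,3,5})), (by decide : ¬ (({0,1,2,3,4} : Finset (Fin 6)) = {0,2,3,4,5}))] at e51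
  have k51 : K 5 1 = 0 := by linear_combination (1 : ℝ) * e51
  have e52 := congrFun h2 (Finset.univ.erase (5 : Fin 6))
  rw [contr_vol, (by decide : Finset.univ.erase (5 : Fin 6) = ({0,1,2,3,4} : Finset (Fin 6)))] at e52
  simp only [Pi.smul_apply, Pi.add_apply, Pi.sub_apply, Pi.neg_apply, bas, smul_eq_mul,
    if_false, if_true, (show (((5 : Fin 6)) : ℕ) = 5 from rfl), (by decide : ({0,1,2,3,4} : Finset (Fin 6)) = {0,1,2,3,4}), (by decide : ¬ (({0,1,2,3,4} : Finset (Fin 6)) = {0,1,3,4,5}))] at e52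
  have k52 : K 5 2 = (2/9 : ℝ) * α^2 := by linear_combination (1 : ℝ) * e52
  have e53 := congrFun h3 (Finset.univ.erase (5 : Fin 6))
  rw [contr_vol, (by decide : Finset.univ.erase (5 : Fin 6) = ({0,1,2,3,4} : Finset (Fin 6)))] at e53
  simp only [Pi.smul_apply, Pi.add_apply, Pi.sub_apply, Pi.neg_apply, bas, smul_eq_mul,
    if_false, if_true, (show (((5 : Fin 6)) : ℕ) = 5 from rfl), (by decide : ¬ (({0,1,2,3,4} : Finset (Fin 6)) = {0,1,2,4,5})), (by decide : ¬ (({0,1,2,3,4} : Finset (Fin 6)) = {1,2,3,4,5}))] at e53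
  have k53 : K 5 3 = 0 := by linear_combination (1 : ℝ) * e53
  have e54 := congrFun h4 (Finset.univ.erase (5 : Fin 6))
  rw [contr_vol, (by decide : Finset.univ.erase (5 : Fin 6) = ({0,1,2,3,4} : Finset (Fin 6)))] at e54
  simp only [Pi.smul_apply, Pi.add_apply, Pi.sub_apply, Pi.neg_apply, bas, smul_eq_mul,
    if_false, if_true, (show (((5 : Fin 6)) : ℕ) = 5 from rfl), (by decide : ¬ (({0,1,2,3,4} : Finset (Fin 6)) = {0,1,2,3,5})), (by decide : ¬ (({0,1,2,3,4} : Finset (Fin 6)) = {0,2,3,4,5}))] at e54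
  have k54 : K 5 4 = 0 := by linear_combination (1 : ℝ) * e54
  have e55 := congrFun h5 (Finset.univ.erase (5 : Fin 6))
  rw [contr_vol, (by decide : Finset.univ.erase (5 : Fin 6) = ({0,1,2,3,4} : Finset (Fin 6)))] at e55
  simp only [Pi.smul_apply, Pi.add_apply, Pi.sub_apply, Pi.neg_apply, bas, smul_eq_mul,
    if_false, if_true, (show (((5 : Fin 6)) : ℕ) = 5 from rfl), (by decide : ({0,1,2,3,4} : Finset (Fin 6)) = {0,1,2,3,4}), (by decide : ¬ (({0,1,2,3,4} : Finset (Fin 6)) = {0,1,3,4,5}))] at e55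
  have k55 : K 5 5 = (-1/9 : ℝ) * α^2 := by linear_combination (1 : ℝ) * e55
  have hlam : lamK K = -(1 / 27) * α ^ 4 := by
    rw [lamK, Matrix.trace]
    simp only [Matrix.diag_apply, Matrix.mul_apply, Fin.sum_univ_six]
    rw [k00, k01, k02, k03, k04, k05, k10, k11, k12, k13, k14, k15, k20, k21, k22, k23, k24, k25, k30, k31, k32, k33, k34, k35, k40, k41, k42, k43, k44, k45, k50, k51, k52, k53, k54, k55]
    ring
  refine ⟨hlam, fun hα => ?_⟩
  rw [hlam]
  have h4 : 0 < α ^ 4 := by positivity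
  linarith
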